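/- arXiv:math/0610777 — 4 statements merged into one kernel-verified Lean document; each statement's English description precedes it below -/
import Mathlib

section
/- In the symmetric group S_n with generating set T of all transpositions, the Hurwitz action of the braid group B_{n-1} on the set of reduced T-decompositions of an n-cycle c (i.e. (n-1)-tuples of transpositions whose product is c) is transitive. -/
set_option linter.unusedSectionVars false

/-- The `i`-th Hurwitz move on `n`-tuples of elements of a group `G`. -/
def hurwitzMove {G : Type*} [Group G] {n : ℕ} (i : ℕ) (f : Fin n → G) : Fin n → G :=
  fun j =>
    if h1 : (j : ℕ) = i ∧ i + 1 < n then f ⟨i + 1, h1.2⟩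
    else if h2 : (j : ℕ) = i + 1 ∧ i + 1 < n then
      (f ⟨i + 1, h2.2⟩)⁻¹ * f ⟨i, Nat.lt_of_succ_lt h2.2⟩ * f ⟨i + 1, h2.2⟩
    else f j

open Equiv Equiv.Perm

namespace HurwitzAux

variable {G : Type*} [Group G]

/-- One Hurwitz move on lists. -/
def HStep (l l' : List G) : Prop :=
  ∃ (l₁ : List G) (a b : G) (l₂ : List G),
    l = l₁ ++ a :: b :: l₂ ∧ l' = l₁ ++ b :: (b⁻¹ * a * b) :: l₂

/-- Hurwitz equivalence on lists. -/
abbrev HRel : List G → List G → Prop := Relation.EqvGen HStep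

theorem HStep.prod_eq {l l' : List G} (h : HStep l l') : l.prod = l'.prod := by
  obtain ⟨l₁, a, b, l₂, rfl, rfl⟩ := h
  simp only [List.prod_append, List.prod_cons]
  group

theorem HStep.length_eq {l l' : List G} (h : HStep l l') : l.length = l'.length := by
  obtain ⟨l₁, a, b, l₂, rfl, rfl⟩ := h
  simp

theorem HRel.prod_eq {l l' : List G} (h : HRel l l') : l.prod = l'.prod := by
  induction h with
  | rel _ _ h => exact h.prod_eq
  | refl => rfl
  | symm _ _ _ ih => exact ih.symm
  | trans _ _ _ _ _ ih1 ih2 => exact ih1.trans ih2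

theorem HRel.length_eq {l l' : List G} (h : HRel l l') : l.length = l'.length := by
  induction h with
  | rel _ _ h => exact h.length_eq
  | refl => rfl
  | symm _ _ _ ih => exact ih.symm
  | trans _ _ _ _ _ ih1 ih2 => exact ih1.trans ih2

theorem HStep.append_right {l l' : List G} (h : HStep l l') (l₃ : List G) :
    HStep (l ++ l₃) (l' ++ l₃) := by
  obtain ⟨l₁, a, b, l₂, rfl, rfl⟩ := h
  exact ⟨l₁, a, b, l₂ ++ l₃, by simp, by simp⟩

theorem HRel.append_right {l l' : List G} (h : HRel l l') (l₃ : List G) :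
    HRel (l ++ l₃) (l' ++ l₃) := by
  induction h with
  | rel _ _ h => exact Relation.EqvGen.rel _ _ (h.append_right l₃)
  | refl => exact Relation.EqvGen.refl _
  | symm _ _ _ ih => exact ih.symm _ _
  | trans _ y _ _ _ ih1 ih2 => exact ih1.trans _ _ _ ih2

/-- A mono lemma: an element can be moved to the end, picking up conjugation. -/
theorem moveToEnd (l₂ : List G) : ∀ (l₁ : List G) (a : G),
    HRel (l₁ ++ a :: l₂) (l₁ ++ l₂ ++ [l₂.prod⁻¹ * a * l₂.prod]) := by
  induction l₂ with
  | nil => intro l₁ a; simp only [List.prod_nil, inv_one, one_mul, mul_one, List.append_nil]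
           exact Relation.EqvGen.refl _
  | cons b l₂ ih =>
    intro l₁ a
    have step : HStep (l₁ ++ a :: b :: l₂) (l₁ ++ b :: (b⁻¹ * a * b) :: l₂) :=
      ⟨l₁, a, b, l₂, rfl, rfl⟩
    have h2 := ih (l₁ ++ [b]) (b⁻¹ * a * b)
    have e1 : (l₁ ++ [b]) ++ (b⁻¹ * a * b) :: l₂ = l₁ ++ b :: (b⁻¹ * a * b) :: l₂ := by simp
    have e2 : (l₁ ++ [b]) ++ l₂ ++ [l₂.prod⁻¹ * (b⁻¹ * a * b) * l₂.prod]
        = l₁ ++ (b :: l₂) ++ [(b :: l₂).prod⁻¹ * a * (b :: l₂).prod] := by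
      simp [mul_assoc]
    rw [e1, e2] at h2
    exact (Relation.EqvGen.rel _ _ step).trans _ _ _ h2

section PermPart
variable {α : Type*} [DecidableEq α] [Fintype α]

theorem exists_last_moving (l : List (Perm α)) (y : α) (h : l.prod y ≠ y) :
    ∃ (l₁ : List (Perm α)) (a : Perm α) (l₂ : List (Perm α)), l = l₁ ++ a :: l₂ ∧ a y ≠ y ∧ ∀ b ∈ l₂, b y = y := by
  induction l using List.reverseRecOn with
  | nil => simp at h
  | append_singleton l a ih =>
    by_cases ha : a y = y
    · have h' : l.prod y ≠ y := by
        rwa [List.prod_append, List.prod_cons, List.prod_nil, mul_one, Perm.mul_apply, ha] at h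
      obtain ⟨l₁, b, l₂, rfl, hb, hl₂⟩ := ih h'
      exact ⟨l₁, b, l₂ ++ [a], by simp, hb, by
        intro c hc
        rcases List.mem_append.1 hc with hc | hc
        · exact hl₂ c hc
        · simp at hc; subst hc; exact ha⟩
    · exact ⟨l, a, [], by simp, ha, by simp⟩

theorem prod_fix_of_forall_fix {l : List (Perm α)} {y : α} (h : ∀ b ∈ l, b y = y) :
    l.prod y = y := by
  induction l with
  | nil => simp
  | cons a l ih =>
    rw [List.prod_cons, Perm.mul_apply, ih (fun b hb => h b (List.mem_cons_of_mem _ hb)),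
      h a List.mem_cons_self]

/-- A reduced factorization into transpositions. -/
def Reduced (l : List (Perm α)) : Prop :=
  (∀ t ∈ l, t.IsSwap) ∧
    ∀ l' : List (Perm α), (∀ t ∈ l', t.IsSwap) → l'.prod = l.prod → l.length ≤ l'.length

theorem swap_eq_of_moves {a : Perm α} (ha : a.IsSwap) {y : α} (h : a y ≠ y) :
    a = Equiv.swap (a y) y := by
  obtain ⟨u, v, huv, rfl⟩ := ha
  rcases eq_or_ne y u with rfl | hyu
  · rw [swap_apply_left, swap_comm]
  · rcases eq_or_ne y v with rfl | hyv
    · rw [swap_apply_right]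
    · exact absurd (swap_apply_of_ne_of_ne hyu hyv) h

/-- Key lemma: a reduced factorization is Hurwitz equivalent to one ending
in `swap (π⁻¹ y) y` for any point `y` moved by the product `π`. -/
theorem hrel_to_ends (m : ℕ) : ∀ (l : List (Perm α)), l.length = m → Reduced l →
    ∀ y : α, l.prod y ≠ y →
    ∃ L, HRel l (L ++ [Equiv.swap (l.prod⁻¹ y) y]) := by
  induction m using Nat.strong_induction_on with
  | _ m IH =>
    intro l hlen hred y hy
    obtain ⟨l₁, a, l₂, rfl, hay, hl₂⟩ := exists_last_moving l y hy
    set π := (l₁ ++ a :: l₂).prod with hπ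
    set s := l₂.prod with hs
    have hsy : s y = y := prod_fix_of_forall_fix hl₂
    have hsy' : s⁻¹ y = y := by rw [Perm.inv_eq_iff_eq]; exact hsy.symm
    have haswap : a.IsSwap := hred.1 a (by simp)
    set z := s⁻¹ (a y) with hz
    have hzy : z ≠ y := by
      rw [hz, Ne, Perm.inv_eq_iff_eq, hsy]
      exact fun h => hay h
    have hτ : s⁻¹ * a * s = Equiv.swap z y := by
      rw [swap_eq_of_moves haswap hay]
      have := Equiv.swap_apply_apply s⁻¹ (a y) y
      rw [inv_inv] at this
      rw [← this, hsy', hz]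
    have hmove : HRel (l₁ ++ a :: l₂) ((l₁ ++ l₂) ++ [Equiv.swap z y]) := by
      have := moveToEnd l₂ l₁ a
      rwa [hτ] at this
    set l' := l₁ ++ l₂ with hl'
    have hσprod : l'.prod * Equiv.swap z y = π := by
      have h0 := hmove.prod_eq
      rw [hπ, h0]; simp [List.prod_append]
    rcases eq_or_ne z (π⁻¹ y) with hcase | hcase
    · exact ⟨l', by rwa [← hcase]⟩
    · -- recursive case
      set σ := l'.prod with hσ
      have hσeq : σ = π * Equiv.swap z y := by
        rw [← hσprod, mul_assoc, swap_mul_self, mul_one]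
      have hσy : σ y ≠ y := by
        rw [hσeq, Perm.mul_apply, swap_apply_right]
        intro h
        exact hcase (by rw [← h, ← Perm.mul_apply, inv_mul_cancel, Perm.one_apply])
      have hl'len : l'.length + 1 = m := by
        rw [← hlen]; simp [hl']; omega
      have hl'red : Reduced l' := by
        constructor
        · intro t ht
          exact hred.1 t (by
            rcases List.mem_append.1 ht with h | h
            · exact List.mem_append.2 (Or.inl h)
            · exact List.mem_append.2 (Or.inr (List.mem_cons_of_mem _ h)))
        · intro l'' hsw hpr
          have h2 : (l'' ++ [Equiv.swap z y]).prod = π := by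
            rw [List.prod_append, List.prod_cons, List.prod_nil, mul_one, hpr, hσprod]
          have h3 := hred.2 (l'' ++ [Equiv.swap z y]) (by
            intro t ht
            rcases List.mem_append.1 ht with h | h
            · exact hsw t h
            · simp at h; subst h; exact ⟨z, y, hzy, rfl⟩) h2
          simp only [List.length_append, List.length_cons, List.length_nil] at h3 ⊢
          simp [hl'] at h3 ⊢
          omega
      obtain ⟨L, hL⟩ := IH l'.length (by omega) l' rfl hl'red y hσy
      have hinv : σ⁻¹ y = π⁻¹ y := by
        rw [hσeq, mul_inv_rev, swap_inv, Perm.mul_apply]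
        exact swap_apply_of_ne_of_ne (Ne.symm hcase)
          (fun h => hy (by conv_lhs => rw [← h, ← Perm.mul_apply, mul_inv_cancel, Perm.one_apply]))
      rw [hinv] at hL
      -- now: l ~ l' ++ [swap z y] ~ (L ++ [swap (π⁻¹ y) y]) ++ [swap z y]
      have h4 : HRel (l₁ ++ a :: l₂) ((L ++ [Equiv.swap (π⁻¹ y) y]) ++ [Equiv.swap z y]) :=
        hmove.trans _ _ _ (hL.append_right [Equiv.swap z y])
      set s' := Equiv.swap (π⁻¹ y) y with hs'
      set q := s' * Equiv.swap z y * s'⁻¹ with hq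
      have hstep : HStep (L ++ [q, s']) (L ++ [s', Equiv.swap z y]) := by
        refine ⟨L, q, s', [], rfl, ?_⟩
        have : s'⁻¹ * q * s' = Equiv.swap z y := by rw [hq]; group
        rw [this]
      refine ⟨L ++ [q], ?_⟩
      have h5 : HRel (L ++ [q, s']) (L ++ [s', Equiv.swap z y]) := Relation.EqvGen.rel _ _ hstep
      have e1 : (L ++ [s']) ++ [Equiv.swap z y] = L ++ [s', Equiv.swap z y] := by simp
      have e2 : (L ++ [q]) ++ [s'] = L ++ [q, s'] := by simp
      rw [e1] at h4
      rw [e2]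
      exact h4.trans _ _ _ (h5.symm _ _)

theorem isSwap_conj {a b : Perm α} (ha : a.IsSwap) : (b⁻¹ * a * b).IsSwap := by
  obtain ⟨u, v, huv, rfl⟩ := ha
  refine ⟨b⁻¹ u, b⁻¹ v, fun h => huv (b⁻¹.injective h), ?_⟩
  have := Equiv.swap_apply_apply b⁻¹ u v
  rw [inv_inv] at this
  rw [this]

theorem isSwap_conj' {a b : Perm α} (ha : a.IsSwap) : (b * a * b⁻¹).IsSwap := by
  have := isSwap_conj (b := b⁻¹) ha
  rwa [inv_inv] at this

theorem HStep.swaps_iff {l l' : List (Perm α)} (h : HStep l l') :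
    (∀ t ∈ l, t.IsSwap) ↔ (∀ t ∈ l', t.IsSwap) := by
  obtain ⟨l₁, a, b, l₂, rfl, rfl⟩ := h
  constructor
  · intro H t ht
    simp only [List.mem_append, List.mem_cons] at ht
    rcases ht with h1 | h1 | h1 | h1
    · exact H t (by simp [h1])
    · subst h1; exact H t (by simp)
    · subst h1; exact isSwap_conj (H a (by simp))
    · exact H t (by simp [h1])
  · intro H t ht
    simp only [List.mem_append, List.mem_cons] at ht
    rcases ht with h1 | h1 | h1 | h1
    · exact H t (by simp [h1])
    · rw [h1, show a = b * (b⁻¹ * a * b) * b⁻¹ by group]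
      exact isSwap_conj' (H (b⁻¹ * a * b) (by simp))
    · rw [h1]; exact H b (by simp)
    · exact H t (by simp [h1])

theorem HRel.swaps_iff {l l' : List (Perm α)} (h : HRel l l') :
    (∀ t ∈ l, t.IsSwap) ↔ (∀ t ∈ l', t.IsSwap) := by
  induction h with
  | rel _ _ h => exact h.swaps_iff
  | refl => exact Iff.rfl
  | symm _ _ _ ih => exact ih.symm
  | trans _ _ _ _ _ ih1 ih2 => exact ih1.trans ih2

theorem HRel.swaps {l l' : List (Perm α)} (h : HRel l l') (hl : ∀ t ∈ l, t.IsSwap) :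
    ∀ t ∈ l', t.IsSwap := h.swaps_iff.1 hl

theorem Reduced.of_hrel_append {l L : List (Perm α)} {τ : Perm α}
    (hred : Reduced l) (hτ : τ.IsSwap) (h : HRel l (L ++ [τ])) : Reduced L := by
  constructor
  · intro t ht
    exact h.swaps hred.1 t (by simp [ht])
  · intro l'' hsw hpr
    have h2 : (l'' ++ [τ]).prod = l.prod := by
      rw [List.prod_append, h.prod_eq, List.prod_append, hpr]
    have h3 := hred.2 (l'' ++ [τ]) (by
      intro t ht
      rcases List.mem_append.1 ht with h1 | h1
      · exact hsw t h1
      · simp at h1; subst h1; exact hτ) h2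
    have h4 := h.length_eq
    simp only [List.length_append, List.length_cons, List.length_nil] at h3 h4
    omega

/-- Transitivity of the Hurwitz action on reduced factorizations, list version. -/
theorem hrel_of_reduced (m : ℕ) : ∀ l l' : List (Perm α), l.length = m → l'.length = m →
    Reduced l → Reduced l' → l.prod = l'.prod → HRel l l' := by
  induction m using Nat.strong_induction_on with
  | _ m IH =>
    intro l l' hl hl' hred hred' hprod
    by_cases hπ1 : l.prod = 1
    · have h0 : l.length ≤ 0 := by
        simpa using hred.2 [] (by simp) (by simp [hπ1])
      have h0' : l'.length ≤ 0 := by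
        simpa using hred'.2 [] (by simp) (by simp [hπ1, ← hprod])
      rw [List.length_eq_zero_iff.1 (Nat.le_zero.1 h0), List.length_eq_zero_iff.1 (Nat.le_zero.1 h0')]
      exact Relation.EqvGen.refl _
    · have hy : ∃ y, l.prod y ≠ y := by
        by_contra hcon
        push_neg at hcon
        exact hπ1 (Equiv.ext hcon)
      obtain ⟨y, hy⟩ := hy
      obtain ⟨L, hL⟩ := hrel_to_ends l.length l rfl hred y hy
      obtain ⟨L', hL'⟩ := hrel_to_ends l'.length l' rfl hred' y (by rwa [hprod] at hy)
      rw [← hprod] at hL'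
      set τ := Equiv.swap (l.prod⁻¹ y) y with hτdef
      have hτ : τ.IsSwap := ⟨_, _, fun h => hy (by conv_lhs => rw [← h, ← Perm.mul_apply, mul_inv_cancel, Perm.one_apply]), rfl⟩
      have hredL : Reduced L := hred.of_hrel_append hτ hL
      have hredL' : Reduced L' := hred'.of_hrel_append hτ hL'
      have hlenL : L.length + 1 = m := by
        have := hL.length_eq; simp at this; omega
      have hlenL' : L'.length + 1 = m := by
        have := hL'.length_eq; simp at this; omega
      have hprodL : L.prod = L'.prod := by
        have e1 := hL.prod_eq
        have e2 := hL'.prod_eq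
        simp only [List.prod_append, List.prod_cons, List.prod_nil, mul_one] at e1 e2
        rw [← hprod] at e2
        have := e1.symm.trans e2
        exact mul_right_cancel this
      have hrec : HRel L L' := IH L.length (by omega) L L' rfl (by omega) hredL hredL' hprodL
      exact (hL.trans _ _ _ ((hrec.append_right [τ]).trans _ _ _ (hL'.symm _ _)))
section Rank
open Module LinearMap

variable {α : Type*} [DecidableEq α] [Fintype α]

/-- The permutation representation of `Perm α` on `α → ℚ` (contravariant). -/
noncomputable def permRep (σ : Perm α) : (α → ℚ) →ₗ[ℚ] (α → ℚ) := LinearMap.funLeft ℚ ℚ σ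

theorem permRep_apply (σ : Perm α) (v : α → ℚ) (i : α) : permRep σ v i = v (σ i) := rfl

theorem permRep_mul (σ τ : Perm α) : permRep (σ * τ) = (permRep τ).comp (permRep σ) := by
  ext v i
  rfl

theorem permRep_one : permRep (1 : Perm α) = LinearMap.id := by ext v i; rfl

/-- Rank of `permRep σ - id`. -/
noncomputable def permRank (σ : Perm α) : ℕ :=
  Module.finrank ℚ (LinearMap.range (permRep σ - LinearMap.id))

theorem permRank_mul_le (σ τ : Perm α) : permRank (σ * τ) ≤ permRank σ + permRank τ := by
  classical
  have hdecomp : permRep (σ * τ) - LinearMap.id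
      = (permRep τ).comp (permRep σ - LinearMap.id) + (permRep τ - LinearMap.id) := by
    rw [permRep_mul]
    ext v i
    simp [LinearMap.sub_apply, LinearMap.add_apply, LinearMap.comp_apply, map_sub]
  have hle : LinearMap.range (permRep (σ * τ) - LinearMap.id)
      ≤ LinearMap.range ((permRep τ).comp (permRep σ - LinearMap.id))
        ⊔ LinearMap.range (permRep τ - LinearMap.id) := by
    rintro x ⟨v, rfl⟩
    rw [hdecomp]
    exact Submodule.add_mem_sup ⟨v, rfl⟩ ⟨v, rfl⟩
  calc permRank (σ * τ)
      ≤ Module.finrank ℚ ↥(LinearMap.range ((permRep τ).comp (permRep σ - LinearMap.id))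
        ⊔ LinearMap.range (permRep τ - LinearMap.id)) := Submodule.finrank_mono hle
    _ ≤ Module.finrank ℚ ↥(LinearMap.range ((permRep τ).comp (permRep σ - LinearMap.id)))
        + Module.finrank ℚ ↥(LinearMap.range (permRep τ - LinearMap.id)) :=
        Submodule.finrank_add_le_finrank_add_finrank _ _
    _ ≤ permRank σ + permRank τ := by
        refine Nat.add_le_add ?_ le_rfl
        rw [LinearMap.range_comp]
        exact Submodule.finrank_map_le _ _

theorem permRank_one : permRank (1 : Perm α) = 0 := by
  unfold permRank
  rw [permRep_one, sub_self]
  simp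

theorem permRank_swap_le {x y : α} (hxy : x ≠ y) : permRank (Equiv.swap x y) ≤ 1 := by
  classical
  set g : α → ℚ := Pi.single x (1 : ℚ) - Pi.single y (1 : ℚ) with hg
  have hrange : LinearMap.range (permRep (Equiv.swap x y) - LinearMap.id)
      ≤ Submodule.span ℚ {g} := by
    rintro w ⟨v, rfl⟩
    rw [Submodule.mem_span_singleton]
    refine ⟨v y - v x, ?_⟩
    funext i
    simp only [LinearMap.sub_apply, LinearMap.id_apply, Pi.smul_apply, Pi.sub_apply, hg,
      permRep_apply, smul_eq_mul]
    rcases eq_or_ne i x with rfl | hix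
    · rw [Equiv.swap_apply_left, Pi.single_eq_same, Pi.single_eq_of_ne hxy]; ring
    · rcases eq_or_ne i y with rfl | hiy
      · rw [Equiv.swap_apply_right, Pi.single_eq_same, Pi.single_eq_of_ne hix]; ring
      · rw [Equiv.swap_apply_of_ne_of_ne hix hiy, Pi.single_eq_of_ne hix,
          Pi.single_eq_of_ne hiy]; ring
  calc permRank (Equiv.swap x y) ≤ Module.finrank ℚ ↥(Submodule.span ℚ {g}) :=
        Submodule.finrank_mono hrange
    _ ≤ 1 := (finrank_span_le_card _).trans (by simp)

theorem permRank_prod_le (l : List (Perm α)) (h : ∀ t ∈ l, t.IsSwap) :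
    permRank l.prod ≤ l.length := by
  induction l with
  | nil => simp [permRank_one]
  | cons t l ih =>
    rw [List.prod_cons]
    calc permRank (t * l.prod) ≤ permRank t + permRank l.prod := permRank_mul_le _ _
      _ ≤ 1 + l.length := by
          obtain ⟨x, y, hxy, rfl⟩ := h t (by simp)
          exact Nat.add_le_add (permRank_swap_le hxy)
            (ih fun t ht => h t (List.mem_cons_of_mem _ ht))
      _ = (t :: l).length := by simp [Nat.add_comm]

theorem permRank_cycle {c : Perm α} (hc : c.IsCycle) (hsupp : c.support = Finset.univ) :
    Fintype.card α - 1 ≤ permRank c := by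
  classical
  obtain ⟨x, hx, hcyc⟩ := hc
  have hker : LinearMap.ker (permRep c - LinearMap.id)
      ≤ Submodule.span ℚ {(fun _ => 1 : α → ℚ)} := by
    intro v hv
    have hfix : ∀ i, v (c i) = v i := by
      intro i
      have := congrFun (LinearMap.mem_ker.1 hv) i
      simpa [LinearMap.sub_apply, permRep_apply, sub_eq_zero] using this
    have hnat : ∀ (k : ℕ) (w : α), v ((c ^ k) w) = v w := by
      intro k
      induction k with
      | zero => intro w; simp
      | succ k ih =>
        intro w
        rw [pow_succ, Perm.mul_apply, ih (c w), hfix w]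
    have hint : ∀ (k : ℤ) (w : α), v ((c ^ k) w) = v w := by
      intro k w
      cases k with
      | ofNat k => simpa using hnat k w
      | negSucc k =>
        have h1 := hnat (k + 1) ((c ^ (Int.negSucc k)) w)
        have h2 : (c ^ (k + 1)) ((c ^ Int.negSucc k) w) = w := by
          rw [← Perm.mul_apply, ← zpow_natCast c (k + 1), ← zpow_add]
          rw [show ((k + 1 : ℕ) : ℤ) + Int.negSucc k = 0 by push_cast [Int.negSucc_eq]; ring]
          simp
        rw [h2] at h1
        exact h1.symm
    have hall : ∀ w, v w = v x := by
      intro w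
      have hw : c w ≠ w := by
        have : w ∈ c.support := by rw [hsupp]; exact Finset.mem_univ w
        exact Perm.mem_support.1 this
      obtain ⟨k, hk⟩ := hcyc hw
      rw [← hk, hint k x]
    rw [Submodule.mem_span_singleton]
    exact ⟨v x, funext fun w => by simp [(hall w).symm, mul_comm]⟩
  have h1 := LinearMap.finrank_range_add_finrank_ker (permRep c - LinearMap.id)
  rw [Module.finrank_pi] at h1
  have h2 : Module.finrank ℚ ↥(LinearMap.ker (permRep c - LinearMap.id)) ≤ 1 :=
    le_trans (Submodule.finrank_mono hker) ((finrank_span_le_card _).trans (by simp))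
  unfold permRank
  omega

end Rank
section Glue
variable {G : Type*} [Group G] {n : ℕ}

theorem hmove_eval_i {i : ℕ} (h : i + 1 < n) (f : Fin n → G) {j : Fin n} (hj : (j : ℕ) = i) :
    hurwitzMove i f j = f ⟨i + 1, h⟩ := by
  simp only [hurwitzMove]
  rw [dif_pos ⟨hj, h⟩]

theorem hmove_eval_i1 {i : ℕ} (h : i + 1 < n) (f : Fin n → G) {j : Fin n} (hj : (j : ℕ) = i + 1) :
    hurwitzMove i f j = (f ⟨i + 1, h⟩)⁻¹ * f ⟨i, Nat.lt_of_succ_lt h⟩ * f ⟨i + 1, h⟩ := by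
  simp only [hurwitzMove]
  rw [dif_neg (by omega), dif_pos ⟨hj, h⟩]

theorem hmove_eval_other {i : ℕ} (f : Fin n → G) {j : Fin n} (hj : (j : ℕ) ≠ i)
    (hj2 : (j : ℕ) ≠ i + 1) : hurwitzMove i f j = f j := by
  simp only [hurwitzMove]
  rw [dif_neg (by omega), dif_neg (by omega)]

theorem hurwitzMove_bijective (i : ℕ) :
    Function.Bijective (hurwitzMove (G := G) (n := n) i) := by
  by_cases h : i + 1 < n
  · refine Function.bijective_iff_has_inverse.2
      ⟨fun g j => if (j : ℕ) = i then g ⟨i, Nat.lt_of_succ_lt h⟩ * g ⟨i + 1, h⟩ *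
          (g ⟨i, Nat.lt_of_succ_lt h⟩)⁻¹
        else if (j : ℕ) = i + 1 then g ⟨i, Nat.lt_of_succ_lt h⟩ else g j, ?_, ?_⟩
    · intro f
      funext j
      beta_reduce
      by_cases hj : (j : ℕ) = i
      · have hjeq : j = ⟨i, Nat.lt_of_succ_lt h⟩ := Fin.ext hj
        subst hjeq
        rw [if_pos rfl, hmove_eval_i h f rfl, hmove_eval_i1 h f rfl]
        group
      · by_cases hj2 : (j : ℕ) = i + 1
        · have hjeq : j = ⟨i + 1, h⟩ := Fin.ext hj2
          subst hjeq
          rw [if_neg hj, if_pos rfl, hmove_eval_i h f rfl]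
        · rw [if_neg hj, if_neg hj2, hmove_eval_other f hj hj2]
    · intro g
      funext j
      beta_reduce
      by_cases hj : (j : ℕ) = i
      · have hjeq : j = ⟨i, Nat.lt_of_succ_lt h⟩ := Fin.ext hj
        subst hjeq
        rw [hmove_eval_i h _ rfl, if_neg (by simp), if_pos rfl]
      · by_cases hj2 : (j : ℕ) = i + 1
        · have hjeq : j = ⟨i + 1, h⟩ := Fin.ext hj2
          subst hjeq
          rw [hmove_eval_i1 h _ rfl, if_pos rfl, if_neg (by simp), if_pos rfl]
          group
        · rw [hmove_eval_other _ hj hj2, if_neg hj, if_neg hj2]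
  · have hid : hurwitzMove (G := G) (n := n) i = id := by
      funext f j
      simp only [hurwitzMove]
      rw [dif_neg (fun hc => h hc.2), dif_neg (fun hc => h hc.2)]
      rfl
    rw [hid]
    exact Function.bijective_id

theorem ofFn_hstep {m : ℕ} {f : Fin m → G} {L : List G} (h : HStep (List.ofFn f) L) :
    ∃ i : ℕ, i + 1 < m ∧ L = List.ofFn (hurwitzMove i f) := by
  obtain ⟨l₁, a, b, l₂, h1, h2⟩ := h
  have hlen : l₁.length + 2 + l₂.length = m := by
    have := congrArg List.length h1
    simp only [List.length_ofFn, List.length_append, List.length_cons] at this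
    omega
  set i := l₁.length with hi
  have him : i + 1 < m := by omega
  refine ⟨i, him, ?_⟩
  have hgf : ∀ (j : ℕ) (hj : j < m), f ⟨j, hj⟩ =
      (l₁ ++ a :: b :: l₂)[j]'(by simp only [List.length_append, List.length_cons]; omega) := by
    intro j hj
    simp only [← h1, List.getElem_ofFn]
  have ha : a = f ⟨i, by omega⟩ := by
    rw [hgf i (by omega), List.getElem_append_right (Nat.le_refl i)]
    simp [hi]
  have hb : b = f ⟨i + 1, him⟩ := by
    rw [hgf (i + 1) him, List.getElem_append_right (by omega : l₁.length ≤ i + 1)]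
    simp [hi]
  rw [h2]
  refine (List.ext_getElem ?_ ?_).symm
  · simp only [List.length_ofFn, List.length_append, List.length_cons]
    omega
  · intro j hj1 hj2
    have hjm : j < m := by simpa using hj1
    rw [List.getElem_ofFn]
    rcases lt_trichotomy j i with hlt | heq | hgt
    · rw [hmove_eval_other _ (by simp; omega) (by simp; omega),
        List.getElem_append_left (by omega), hgf j hjm,
        List.getElem_append_left (by omega)]
    · subst heq
      rw [hmove_eval_i him _ (by simp), ← hb,
        List.getElem_append_right (Nat.le_refl _)]
      simp
    · rw [List.getElem_append_right (by omega : l₁.length ≤ j)]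
      rcases Nat.eq_or_lt_of_le hgt with heq | hgt2
      · rw [hmove_eval_i1 him _ (by simp [← heq]), ← ha, ← hb]
        have : j - i = 1 := by omega
        simp [← hi, this]
      · rw [hmove_eval_other _ (by simp; omega) (by simp; omega), hgf j hjm,
          List.getElem_append_right (by omega : l₁.length ≤ j)]
        obtain ⟨k, hk⟩ : ∃ k, j - l₁.length = k + 1 + 1 := ⟨j - l₁.length - 2, by omega⟩
        simp only [hk, List.getElem_cons_succ]
end Glue

section Main

theorem closure_of_hrel {n : ℕ} {L L' : List (Equiv.Perm (Fin n))} (h : HRel L L') :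
    ∀ (f f' : Fin (n - 1) → Equiv.Perm (Fin n)), L = List.ofFn f → L' = List.ofFn f' →
    ∃ β ∈ Subgroup.closure
      {σ : Equiv.Perm (Fin (n - 1) → Equiv.Perm (Fin n)) |
        ∃ i : ℕ, i + 1 < n - 1 ∧ ⇑σ = hurwitzMove i}, β f = f' := by
  induction h with
  | rel x y hstep =>
    intro f f' h1 h2
    subst h1
    obtain ⟨i, hi, hEq⟩ := ofFn_hstep hstep
    rw [h2] at hEq
    have hf' : hurwitzMove i f = f' := List.ofFn_injective hEq.symm
    exact ⟨Equiv.ofBijective (hurwitzMove i) (hurwitzMove_bijective i),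
      Subgroup.subset_closure ⟨i, hi, rfl⟩, hf'⟩
  | refl x =>
    intro f f' h1 h2
    exact ⟨1, Subgroup.one_mem _, List.ofFn_injective (h1.symm.trans h2)⟩
  | symm x y hxy ih =>
    intro f f' h1 h2
    obtain ⟨β, hβ, hβf⟩ := ih f' f h2 h1
    exact ⟨β⁻¹, Subgroup.inv_mem _ hβ, by rw [← hβf]; exact β.symm_apply_apply f'⟩
  | trans x y z hxy hyz ih1 ih2 =>
    intro f f' h1 h2
    have hylen : y.length = n - 1 := by
      rw [← HRel.length_eq hxy, h1]
      simp
    set g : Fin (n - 1) → Equiv.Perm (Fin n) :=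
      fun j => y.get ⟨(j : ℕ), lt_of_lt_of_le j.isLt (le_of_eq hylen.symm)⟩ with hg
    have hy : y = List.ofFn g := by
      refine List.ext_getElem (by simp [hylen]) ?_
      intro j hj1 hj2
      rw [List.getElem_ofFn]
      simp only [hg, List.get_eq_getElem]
    obtain ⟨β1, hβ1, hb1⟩ := ih1 f g h1 hy
    obtain ⟨β2, hβ2, hb2⟩ := ih2 g f' hy h2
    exact ⟨β2 * β1, Subgroup.mul_mem _ hβ2 hβ1, by rw [Equiv.Perm.mul_apply, hb1, hb2]⟩

end Main
end PermPart
end HurwitzAux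

/-- The Hurwitz action of `B_{n-1}` on reduced transposition decompositions of an `n`-cycle
in the symmetric group `S_n` is transitive. -/
theorem hurwitz_transitive_on_reduced_decompositions (n : ℕ) (c : Equiv.Perm (Fin n))
    (hc : c.IsCycle) (hsupp : c.support = Finset.univ)
    (t t' : Fin (n - 1) → Equiv.Perm (Fin n))
    (ht : ∀ i, (t i).IsSwap) (ht' : ∀ i, (t' i).IsSwap)
    (hp : (List.ofFn t).prod = c) (hp' : (List.ofFn t').prod = c) :
    ∃ β ∈ Subgroup.closure
      {σ : Equiv.Perm (Fin (n - 1) → Equiv.Perm (Fin n)) |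
        ∃ i : ℕ, i + 1 < n - 1 ∧ ⇑σ = hurwitzMove i},
      β t = t' := by
  classical
  have hrank : n - 1 ≤ HurwitzAux.permRank c := by
    have := HurwitzAux.permRank_cycle hc hsupp
    simpa using this
  have hredaux : ∀ (s : Fin (n - 1) → Equiv.Perm (Fin n)), (∀ i, (s i).IsSwap) →
      (List.ofFn s).prod = c → HurwitzAux.Reduced (List.ofFn s) := by
    intro s hs hps
    constructor
    · intro a hha
      obtain ⟨i, rfl⟩ := (List.mem_ofFn).1 hha
      exact hs i
    · intro l'' hsw hpr
      have h1 : HurwitzAux.permRank c ≤ l''.length := by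
        have := HurwitzAux.permRank_prod_le l'' hsw
        rwa [hpr, hps] at this
      simp only [List.length_ofFn]
      omega
  have hrel : HurwitzAux.HRel (List.ofFn t) (List.ofFn t') :=
    HurwitzAux.hrel_of_reduced (n - 1) (List.ofFn t) (List.ofFn t') (by simp) (by simp)
      (hredaux t ht hp) (hredaux t' ht' hp') (by rw [hp, hp'])
  exact HurwitzAux.closure_of_hrel hrel t t' rfl rfl
end

section
/- Let W = G(d,1,n) be the group of n×n monomial matrices whose nonzero entries are d-th roots of unity, and let π: W → S_n send a monomial matrix to its underlying permutation. If (r_1,…,r_n) is a tuple of reflections of W whose product is the Coxeter element c = ρ_{1,ζ_d} τ_{1,2} τ_{2,3} ⋯ τ_{n-1,n}, then exactly one of the r_i is a diagonal (long) reflection, and the images under π of the remaining n−1 reflections form a reduced transposition decomposition of the n-cycle π(c). -/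
open Equiv SemidirectProduct

/-- The permutation action of `S_n` on `n`-tuples of `d`-th roots of unity
(written multiplicatively as `Multiplicative (ZMod d)`). -/
def permHom (d n : ℕ) :
    Equiv.Perm (Fin n) →* MulAut (Fin n → Multiplicative (ZMod d)) where
  toFun σ :=
    { toFun := fun f => f ∘ ⇑σ.symm
      invFun := fun f => f ∘ ⇑σ
      left_inv := fun f => by funext x; simp
      right_inv := fun f => by funext x; simp
      map_mul' := fun f g => rfl }
  map_one' := by
    ext f x
    rfl
  map_mul' σ τ := by
    ext f x
    simp [Equiv.Perm.mul_def]

/-- The group `G(d,1,n)` of `n×n` monomial matrices whose nonzero entries are `d`-th roots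
of unity, realized as the wreath product `μ_d ≀ S_n`. -/
abbrev Gd1n (d n : ℕ) : Type :=
  SemidirectProduct (Fin n → Multiplicative (ZMod d)) (Equiv.Perm (Fin n)) (permHom d n)

/-- The long (diagonal) reflection `ρ_{i,ζ}` (a reflection when `ζ ≠ 1`). -/
def longRefl (d n : ℕ) (i : Fin n) (ζ : Multiplicative (ZMod d)) : Gd1n d n :=
  SemidirectProduct.inl (Pi.mulSingle i ζ)

/-- The short reflection `τ_{i,j}^ζ = ρ_{i,ζ}⁻¹ τ_{i,j} ρ_{i,ζ}`. -/
def shortRefl (d n : ℕ) (i j : Fin n) (ζ : Multiplicative (ZMod d)) : Gd1n d n :=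
  (longRefl d n i ζ)⁻¹ * SemidirectProduct.inr (Equiv.swap i j) * longRefl d n i ζ

/-- Predicate: `g` is a long (diagonal) reflection. -/
def IsLongRefl {d n : ℕ} (g : Gd1n d n) : Prop :=
  ∃ (i : Fin n) (ζ : Multiplicative (ZMod d)), ζ ≠ 1 ∧ g = longRefl d n i ζ

/-- Predicate: `g` is a short reflection. -/
def IsShortRefl {d n : ℕ} (g : Gd1n d n) : Prop :=
  ∃ (i j : Fin n) (ζ : Multiplicative (ZMod d)), i ≠ j ∧ g = shortRefl d n i j ζ

/-- The Coxeter element `c = ρ_{1,ζ_d} τ_{1,2} τ_{2,3} ⋯ τ_{n-1,n}` of `G(d,1,n)`. -/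
def coxG (d n : ℕ) (hn : 0 < n) : Gd1n d n :=
  longRefl d n ⟨0, hn⟩ (Multiplicative.ofAdd (1 : ZMod d)) *
    (List.ofFn fun i : Fin (n - 1) =>
      (SemidirectProduct.inr
        (Equiv.swap ⟨(i : ℕ), Nat.lt_of_lt_of_le i.isLt (Nat.sub_le n 1)⟩
          ⟨(i : ℕ) + 1, by have := i.isLt; omega⟩) : Gd1n d n)).prod

/-! ### Auxiliary material -/

section Aux

variable {d n : ℕ}

/-- The "color" homomorphism: the product of the diagonal entries. -/
def colorHom (d n : ℕ) : Gd1n d n →* Multiplicative (ZMod d) where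
  toFun g := ∏ j, g.left j
  map_one' := by simp
  map_mul' a b := by
    have hperm : (permHom d n a.right) b.left = b.left ∘ ⇑a.right.symm := rfl
    simp only [SemidirectProduct.mul_left, hperm, Pi.mul_apply, Function.comp_apply,
      Finset.prod_mul_distrib]
    congr 1
    exact Equiv.prod_comp a.right.symm b.left

lemma colorHom_long (i : Fin n) (ζ : Multiplicative (ZMod d)) :
    colorHom d n (longRefl d n i ζ) = ζ := by
  show ∏ j, Pi.mulSingle i ζ j = ζ
  simp

lemma colorHom_apply (g : Gd1n d n) : colorHom d n g = ∏ j, g.left j := rfl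

lemma colorHom_inr (σ : Equiv.Perm (Fin n)) :
    colorHom d n (SemidirectProduct.inr σ : Gd1n d n) = 1 := by
  rw [colorHom_apply]
  simp

lemma colorHom_short (i j : Fin n) (ζ : Multiplicative (ZMod d)) :
    colorHom d n (shortRefl d n i j ζ) = 1 := by
  unfold shortRefl
  rw [map_mul, map_mul, map_inv, colorHom_inr, colorHom_long]
  group

lemma colorHom_cox (hn : 0 < n) :
    colorHom d n (coxG d n hn) = Multiplicative.ofAdd (1 : ZMod d) := by
  unfold coxG
  rw [map_mul, colorHom_long, map_list_prod]
  have : ((List.ofFn fun i : Fin (n - 1) =>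
      (SemidirectProduct.inr
        (Equiv.swap ⟨(i : ℕ), Nat.lt_of_lt_of_le i.isLt (Nat.sub_le n 1)⟩
          ⟨(i : ℕ) + 1, by have := i.isLt; omega⟩) : Gd1n d n)).map (colorHom d n)).prod = 1 := by
    apply List.prod_eq_one
    intro x hx
    rw [List.map_ofFn, List.mem_ofFn] at hx
    obtain ⟨i, hi⟩ := hx
    rw [← hi]
    exact colorHom_inr _
  rw [this, mul_one]

lemma rightHom_long (i : Fin n) (ζ : Multiplicative (ZMod d)) :
    rightHom (longRefl d n i ζ) = 1 :=
  rightHom_inl _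

lemma rightHom_short (i j : Fin n) (ζ : Multiplicative (ZMod d)) :
    rightHom (shortRefl d n i j ζ) = Equiv.swap i j := by
  unfold shortRefl
  rw [map_mul, map_mul, map_inv, rightHom_inr, rightHom_long]
  group

/-- The list of adjacent transpositions `(0 1), (1 2), …, (m-1 m)` in `Perm (Fin n)`. -/
def adjList (n m : ℕ) (hm : m + 1 ≤ n) : List (Equiv.Perm (Fin n)) :=
  List.ofFn fun i : Fin m =>
    Equiv.swap ⟨(i : ℕ), by have := i.isLt; omega⟩ ⟨(i : ℕ) + 1, by have := i.isLt; omega⟩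

lemma adjList_prod_apply (n : ℕ) : ∀ (m : ℕ) (hm : m + 1 ≤ n) (x : Fin n),
    (adjList n m hm).prod x =
      if h : (x : ℕ) < m then ⟨(x : ℕ) + 1, by omega⟩
      else if h' : (x : ℕ) = m then ⟨0, by omega⟩ else x := by
  intro m
  induction m with
  | zero =>
    intro hm x
    simp only [adjList, List.ofFn_zero, List.prod_nil]
    rw [dif_neg (Nat.not_lt_zero _)]
    by_cases h : (x : ℕ) = 0
    · rw [dif_pos h]
      exact (Equiv.Perm.one_apply x).trans (Fin.ext h)
    · rw [dif_neg h]
      rfl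
  | succ m ih =>
    intro hm x
    have hL : adjList n (m + 1) hm =
        (adjList n m (by omega)).concat
          (Equiv.swap ⟨m, by omega⟩ ⟨m + 1, by omega⟩) := by
      unfold adjList
      rw [List.ofFn_succ']
      rfl
    rw [hL, List.prod_concat, Equiv.Perm.mul_apply]
    rcases lt_or_ge (x : ℕ) m with hx | hx
    · have h1 : Equiv.swap (⟨m, by omega⟩ : Fin n) ⟨m + 1, by omega⟩ x = x := by
        apply Equiv.swap_apply_of_ne_of_ne
        · exact fun h => absurd (congrArg Fin.val h) (show ¬((x : ℕ) = m) from by omega)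
        · exact fun h => absurd (congrArg Fin.val h) (show ¬((x : ℕ) = m + 1) from by omega)
      rw [h1, ih (by omega) x, dif_pos hx, dif_pos (show (x : ℕ) < m + 1 from by omega)]
    · rcases Nat.eq_or_lt_of_le hx with hx' | hx'
      · -- x = m
        have hxm : x = (⟨m, by omega⟩ : Fin n) := Fin.ext hx'.symm
        rw [hxm, Equiv.swap_apply_left, ih (by omega)]
        rw [dif_neg (show ¬(m + 1 < m) from by omega),
          dif_neg (show ¬(m + 1 = m) from by omega),
          dif_pos (show m < m + 1 from by omega)]
      · rcases Nat.eq_or_lt_of_le hx' with hx'' | hx''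
        · -- x = m + 1
          have hxm : x = (⟨m + 1, by omega⟩ : Fin n) := Fin.ext hx''.symm
          rw [hxm, Equiv.swap_apply_right, ih (by omega)]
          rw [dif_neg (show ¬(m < m) from by omega), dif_pos (show m = m from rfl),
            dif_neg (show ¬(m + 1 < m + 1) from by omega),
            dif_pos (show m + 1 = m + 1 from rfl)]
        · -- x > m + 1
          have h1 : Equiv.swap (⟨m, by omega⟩ : Fin n) ⟨m + 1, by omega⟩ x = x := by
            apply Equiv.swap_apply_of_ne_of_ne
            · exact fun h => absurd (congrArg Fin.val h) (show ¬((x : ℕ) = m) from by omega)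
            · exact fun h => absurd (congrArg Fin.val h)
                (show ¬((x : ℕ) = m + 1) from by omega)
          rw [h1, ih (by omega) x, dif_neg (show ¬((x : ℕ) < m) from by omega),
            dif_neg (show ¬((x : ℕ) = m) from by omega),
            dif_neg (show ¬((x : ℕ) < m + 1) from by omega),
            dif_neg (show ¬((x : ℕ) = m + 1) from by omega)]

lemma rightHom_cox (hn : 0 < n) :
    rightHom (coxG d n hn) = (adjList n (n - 1) (by omega)).prod := by
  unfold coxG
  rw [map_mul, rightHom_long, one_mul, map_list_prod, List.map_ofFn]
  congr 1

/-- The subspace of vectors fixed by (precomposition with) a permutation. -/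
def fixV (n : ℕ) (τ : Equiv.Perm (Fin n)) : Submodule ℚ (Fin n → ℚ) where
  carrier := {v | ∀ x, v (τ x) = v x}
  add_mem' := fun ha hb x => by simp [ha x, hb x]
  zero_mem' := fun x => rfl
  smul_mem' := fun c v hv x => by simp [hv x]

lemma mem_fixV {τ : Equiv.Perm (Fin n)} {v : Fin n → ℚ} :
    v ∈ fixV n τ ↔ ∀ x, v (τ x) = v x := Iff.rfl

lemma fixV_one : fixV n 1 = ⊤ := by
  ext v; simp [mem_fixV]

lemma fixV_inf_le_mul (a b : Equiv.Perm (Fin n)) :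
    fixV n a ⊓ fixV n b ≤ fixV n (a * b) := by
  rintro v ⟨ha, hb⟩ x
  rw [Equiv.Perm.mul_apply, ha (b x), hb x]

lemma finrank_fixV_le (τ : Equiv.Perm (Fin n)) : Module.finrank ℚ (fixV n τ) ≤ n := by
  have h := Submodule.finrank_le (fixV n τ)
  simpa using h

lemma finrank_fixV_one : Module.finrank ℚ (fixV n (1 : Equiv.Perm (Fin n))) = n := by
  rw [fixV_one, finrank_top]
  simp

lemma finrank_fixV_swap_ge {a b : Fin n} (hab : a ≠ b) :
    n ≤ Module.finrank ℚ (fixV n (Equiv.swap a b)) + 1 := by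
  classical
  set f : (Fin n → ℚ) →ₗ[ℚ] ℚ :=
    (LinearMap.proj a : (Fin n → ℚ) →ₗ[ℚ] ℚ) - (LinearMap.proj b : (Fin n → ℚ) →ₗ[ℚ] ℚ)
    with hf
  have hker : LinearMap.ker f ≤ fixV n (Equiv.swap a b) := by
    intro v hv x
    have hv' : v a = v b := by
      have := LinearMap.mem_ker.mp hv
      simpa [hf, sub_eq_zero] using this
    rcases eq_or_ne x a with rfl | hxa
    · rw [Equiv.swap_apply_left, hv']
    rcases eq_or_ne x b with rfl | hxb
    · rw [Equiv.swap_apply_right, hv']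
    · rw [Equiv.swap_apply_of_ne_of_ne hxa hxb]
  have h1 := LinearMap.finrank_range_add_finrank_ker f
  have h2 : Module.finrank ℚ (LinearMap.range f) ≤ 1 := by
    have := Submodule.finrank_le (LinearMap.range f)
    simpa using this
  have h3 : Module.finrank ℚ (LinearMap.ker f) ≤ Module.finrank ℚ (fixV n (Equiv.swap a b)) :=
    Submodule.finrank_mono hker
  have h4 : Module.finrank ℚ (Fin n → ℚ) = n := by simp
  omega

lemma fixV_list_prod (L : List (Equiv.Perm (Fin n))) :
    n ≤ Module.finrank ℚ (fixV n L.prod) +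
      (L.map fun t => n - Module.finrank ℚ (fixV n t)).sum := by
  induction L with
  | nil =>
    simp [finrank_fixV_one]
    exact le_of_eq (finrank_fixV_one (n := n)).symm
  | cons t L ih =>
    have h1 := Submodule.finrank_sup_add_finrank_inf_eq (fixV n t) (fixV n L.prod)
    have h2 : Module.finrank ℚ ↥(fixV n t ⊔ fixV n L.prod) ≤ n := by
      have := Submodule.finrank_le (fixV n t ⊔ fixV n L.prod)
      simpa using this
    have h3 : Module.finrank ℚ (fixV n t ⊓ fixV n L.prod : Submodule ℚ (Fin n → ℚ)) ≤
        Module.finrank ℚ (fixV n (t :: L).prod) :=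
      Submodule.finrank_mono (fixV_inf_le_mul t L.prod)
    have h4 := finrank_fixV_le (n := n) t
    simp only [List.map_cons, List.sum_cons]
    omega

lemma finrank_fixV_adj (hn : 0 < n) :
    Module.finrank ℚ (fixV n (adjList n (n - 1) (by omega)).prod) ≤ 1 := by
  have hspan : fixV n (adjList n (n - 1) (by omega)).prod ≤
      Submodule.span ℚ {(fun _ => 1 : Fin n → ℚ)} := by
    intro v hv
    have hconst : ∀ (k : ℕ) (hk : k < n), v ⟨k, hk⟩ = v ⟨0, hn⟩ := by
      intro k
      induction k with
      | zero => intro hk; rfl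
      | succ k ihk =>
        intro hk
        have hk' : k < n := by omega
        have h := mem_fixV.mp hv ⟨k, hk'⟩
        rw [adjList_prod_apply n (n - 1) (by omega) ⟨k, hk'⟩] at h
        rw [dif_pos (show k < n - 1 from by omega)] at h
        rw [← ihk hk']
        exact h
    have hv0 : v = v ⟨0, hn⟩ • (fun _ => 1 : Fin n → ℚ) := by
      funext x
      have := hconst (x : ℕ) x.isLt
      simp only [Pi.smul_apply, smul_eq_mul, mul_one]
      rw [← this]
    rw [hv0]
    exact Submodule.smul_mem _ _ (Submodule.mem_span_singleton_self _)
  have h1 : Module.finrank ℚ (fixV n (adjList n (n - 1) (by omega)).prod) ≤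
      Module.finrank ℚ (Submodule.span ℚ {(fun _ => 1 : Fin n → ℚ)}) :=
    Submodule.finrank_mono hspan
  have h2 : Module.finrank ℚ (Submodule.span ℚ {(fun _ => 1 : Fin n → ℚ)}) = 1 := by
    apply finrank_span_singleton
    intro h
    have := congrFun h ⟨0, hn⟩
    norm_num at this
  omega

end Aux

/-- If a tuple `(r_1,…,r_n)` of reflections of `G(d,1,n)` has product the Coxeter element
`c`, then exactly one `r_i` is a long (diagonal) reflection, and the images under
`π : G(d,1,n) → S_n` of the remaining `n-1` (short) reflections are transpositions whose
ordered product is the `n`-cycle `π(c)`. -/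
theorem reflection_decompositions_of_coxeter_Gd1n (d n : ℕ) (hd : 2 ≤ d) (hn : 0 < n)
    (r : Fin n → Gd1n d n)
    (hrefl : ∀ i, IsLongRefl (r i) ∨ IsShortRefl (r i))
    (hprod : (List.ofFn r).prod = coxG d n hn) :
    ∃ i0 : Fin n, IsLongRefl (r i0) ∧ (∀ i, IsLongRefl (r i) → i = i0) ∧
      (∀ i, i ≠ i0 → (SemidirectProduct.rightHom (r i)).IsSwap) ∧
      SemidirectProduct.rightHom (r i0) = 1 ∧
      (List.ofFn fun i => SemidirectProduct.rightHom (r i)).prod =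
        SemidirectProduct.rightHom (coxG d n hn) := by
  classical
  -- Step 1: at least one long reflection, by the color homomorphism.
  have hex : ∃ i0, IsLongRefl (r i0) := by
    by_contra h
    push_neg at h
    have hshort : ∀ i, IsShortRefl (r i) := fun i => (hrefl i).resolve_left (h i)
    have h1 : colorHom d n ((List.ofFn r).prod) = 1 := by
      rw [map_list_prod]
      apply List.prod_eq_one
      intro x hx
      rw [List.map_ofFn, List.mem_ofFn] at hx
      obtain ⟨i, hi⟩ := hx
      obtain ⟨a, b, ζ, hab, he⟩ := hshort i
      rw [← hi]
      show colorHom d n (r i) = 1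
      rw [he]
      exact colorHom_short a b ζ
    rw [hprod, colorHom_cox] at h1
    haveI : Fact (1 < d) := ⟨hd⟩
    exact one_ne_zero (ofAdd_eq_one.mp h1)
  obtain ⟨i0, hi0⟩ := hex
  -- basic facts about the images under rightHom
  have hone_or_swap : ∀ i, rightHom (r i) = 1 ∨ (rightHom (r i)).IsSwap := by
    intro i
    rcases hrefl i with ⟨a, ζ, hz, he⟩ | ⟨a, b, ζ, hab, he⟩
    · left; rw [he]; exact rightHom_long a ζ
    · right; rw [he, rightHom_short]; exact ⟨a, b, hab, rfl⟩
  have hDle : ∀ i, n - Module.finrank ℚ (fixV n (rightHom (r i))) ≤ 1 := by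
    intro i
    rcases hone_or_swap i with h | ⟨a, b, hab, h⟩
    · rw [h, finrank_fixV_one]; omega
    · rw [h]
      have := finrank_fixV_swap_ge (n := n) hab
      omega
  have hlong_rightHom : ∀ i, IsLongRefl (r i) → rightHom (r i) = 1 := by
    rintro i ⟨a, ζ, hz, he⟩
    rw [he]; exact rightHom_long a ζ
  -- the product of the images is the adjacent-cycle
  have hprodR : (List.ofFn fun i => rightHom (r i)).prod = rightHom (coxG d n hn) := by
    have : (List.ofFn fun i => rightHom (r i)) = (List.ofFn r).map rightHom := by
      rw [List.map_ofFn]; rfl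
    rw [this, ← map_list_prod, hprod]
  -- Step 2: at most one long reflection, by fixed-space dimension counting.
  have huniq : ∀ i, IsLongRefl (r i) → i = i0 := by
    intro i1 hi1
    by_contra hne
    have hn2 : 2 ≤ n := by
      haveI : Nontrivial (Fin n) := ⟨⟨i1, i0, hne⟩⟩
      have := Fintype.one_lt_card (α := Fin n)
      exact Nat.succ_le_of_lt (by simpa using this)
    set L := List.ofFn fun i => (rightHom (r i) : Equiv.Perm (Fin n)) with hL
    have key := fixV_list_prod (n := n) L
    have hLprod : L.prod = (adjList n (n - 1) (by omega)).prod := by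
      rw [hL, hprodR, rightHom_cox]
    have hfr : Module.finrank ℚ (fixV n L.prod) ≤ 1 := by
      rw [hLprod]; exact finrank_fixV_adj hn
    have hsum : (L.map fun t => n - Module.finrank ℚ (fixV n t)).sum ≤ n - 2 := by
      rw [hL, List.map_ofFn, List.sum_ofFn]
      simp only [Function.comp]
      set D : Fin n → ℕ := fun i => n - Module.finrank ℚ (fixV n (rightHom (r i))) with hD
      have hD0 : D i0 = 0 := by
        rw [hD]; simp only
        rw [hlong_rightHom i0 hi0, finrank_fixV_one]; omega
      have hD1 : D i1 = 0 := by
        rw [hD]; simp only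
        rw [hlong_rightHom i1 hi1, finrank_fixV_one]; omega
      have e1 : ∑ i, D i = ∑ i ∈ Finset.univ.erase i0, D i :=
        (Finset.sum_erase _ hD0).symm
      have hi1mem : i1 ∈ Finset.univ.erase i0 := Finset.mem_erase.mpr ⟨hne, Finset.mem_univ _⟩
      have e2 : ∑ i ∈ Finset.univ.erase i0, D i =
          ∑ i ∈ (Finset.univ.erase i0).erase i1, D i :=
        (Finset.sum_erase _ hD1).symm
      have e3 : ∑ i ∈ (Finset.univ.erase i0).erase i1, D i ≤
          ((Finset.univ.erase i0).erase i1).card * 1 := by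
        apply Finset.sum_le_card_nsmul
        intro i _
        exact hDle i
      have hcard : ((Finset.univ.erase i0).erase i1).card = n - 2 := by
        rw [Finset.card_erase_of_mem hi1mem, Finset.card_erase_of_mem (Finset.mem_univ _)]
        simp only [Finset.card_univ, Fintype.card_fin]
        omega
      calc ∑ i, D i = ∑ i ∈ (Finset.univ.erase i0).erase i1, D i := by rw [e1, e2]
        _ ≤ ((Finset.univ.erase i0).erase i1).card * 1 := e3
        _ = n - 2 := by rw [hcard, mul_one]
    omega
  refine ⟨i0, hi0, huniq, ?_, hlong_rightHom i0 hi0, hprodR⟩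
  intro i hne
  have hnl : ¬IsLongRefl (r i) := fun h => hne (huniq i h)
  obtain ⟨a, b, ζ, hab, he⟩ := (hrefl i).resolve_left hnl
  rw [he, rightHom_short]
  exact ⟨a, b, hab, rfl⟩
end

section
/- The subspace E_n^gen of the space of configurations of n distinct points in C with pairwise distinct real parts, modulo nothing (i.e. as a subspace of unordered configurations), is contractible. -/
/-- Ordered configurations of `n` points of `ℂ` with pairwise distinct real parts. -/
abbrev OrderedGen (n : ℕ) : Type :=
  {f : Fin n → ℂ // ∀ i j : Fin n, i ≠ j → (f i).re ≠ (f j).re}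

/-- Two ordered configurations are equivalent iff they differ by a permutation of the
indices; the quotient is the space `E_n^gen` of unordered configurations of `n` points
with pairwise distinct real parts. -/
def genSetoid (n : ℕ) : Setoid (OrderedGen n) where
  r f g := ∃ σ : Equiv.Perm (Fin n), f.1 = g.1 ∘ σ
  iseqv := by
    constructor
    · intro f; exact ⟨Equiv.refl _, rfl⟩
    · rintro f g ⟨σ, hσ⟩
      refine ⟨σ.symm, funext fun x => ?_⟩
      simp [hσ]
    · rintro f g h ⟨σ, hσ⟩ ⟨τ, hτ⟩
      refine ⟨σ.trans τ, funext fun x => ?_⟩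
      simp [hσ, hτ]

namespace EgenAux

variable {n : ℕ}

/-- The set of configurations sorted strictly by real part. -/
def SortedSet (n : ℕ) : Set (Fin n → ℂ) := {g | StrictMono fun i => (g i).re}

/-- A strictly monotone permutation of `Fin n` is the identity. -/
lemma perm_strictMono_eq_id {σ : Equiv.Perm (Fin n)} (hσ : StrictMono ⇑σ) :
    ∀ i, σ i = i := by
  intro i
  have h3 := Subsingleton.elim (StrictMono.orderIsoOfSurjective ⇑σ hσ σ.surjective)
    (OrderIso.refl (Fin n))
  have h4 := congrArg (fun e : Fin n ≃o Fin n => (e : Fin n → Fin n) i) h3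
  simpa using h4

/-- Uniqueness of the sorted representative. -/
lemma sorted_unique {a b : Fin n → ℂ} (σ : Equiv.Perm (Fin n))
    (ha : StrictMono fun i => (a i).re) (hb : StrictMono fun i => (b i).re)
    (hab : a = b ∘ σ) : a = b := by
  have hσ : StrictMono ⇑σ := by
    intro i j hij
    have h := ha hij
    simp only [hab, Function.comp_apply] at h
    exact hb.lt_iff_lt.mp h
  funext x
  rw [hab]
  simp [perm_strictMono_eq_id hσ]

/-- The permutation sorting a configuration by real part. -/
noncomputable def sortPerm (f : Fin n → ℂ) : Equiv.Perm (Fin n) :=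
  Tuple.sort (fun i => (f i).re)

lemma strictMono_sorted (f : OrderedGen n) :
    StrictMono fun i => ((f.1 ∘ sortPerm f.1) i).re := by
  have hmono : Monotone ((fun i => (f.1 i).re) ∘ sortPerm f.1) :=
    Tuple.monotone_sort _
  have hinj : Function.Injective ((fun i => (f.1 i).re) ∘ sortPerm f.1) := by
    intro i j hij
    by_contra hne
    exact f.2 _ _ (fun h => hne ((sortPerm f.1).injective h)) hij
  exact hmono.strictMono_of_injective hinj

/-- The sorting map, valued in the sorted set. -/
noncomputable def sortMap (f : OrderedGen n) : SortedSet n :=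
  ⟨f.1 ∘ sortPerm f.1, strictMono_sorted f⟩

/-- Inclusion of sorted configurations into ordered configurations. -/
def incl (g : SortedSet n) : OrderedGen n :=
  ⟨g.1, by
    intro i j hij hre
    exact hij (g.2.injective hre)⟩

lemma sortMap_incl (g : SortedSet n) : sortMap (incl g) = g := by
  apply Subtype.ext
  exact sorted_unique (sortPerm g.1) (strictMono_sorted (incl g)) g.2 rfl

lemma sortMap_respects (f g : OrderedGen n) (h : (genSetoid n).r f g) :
    sortMap f = sortMap g := by
  obtain ⟨σ, hσ⟩ := h
  apply Subtype.ext
  refine sorted_unique (((sortPerm f.1).trans σ).trans (sortPerm g.1).symm)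
    (strictMono_sorted f) (strictMono_sorted g) ?_
  funext x
  simp [sortMap, hσ, Function.comp]

lemma continuous_sortMapVal :
    Continuous fun f : OrderedGen n => (f.1 ∘ sortPerm f.1 : Fin n → ℂ) := by
  rw [continuous_iff_continuousAt]
  intro f0
  have hG : Continuous fun f : OrderedGen n => (f.1 ∘ sortPerm f0.1 : Fin n → ℂ) :=
    continuous_pi fun i => (continuous_apply _).comp continuous_subtype_val
  refine hG.continuousAt.congr_of_eventuallyEq ?_
  have hopen : IsOpen {f : OrderedGen n |
      StrictMono fun i => ((f.1 ∘ sortPerm f0.1) i).re} := by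
    have : {f : OrderedGen n | StrictMono fun i => ((f.1 ∘ sortPerm f0.1) i).re}
        = ⋂ i, ⋂ j, {f : OrderedGen n |
            i < j → ((f.1 (sortPerm f0.1 i)).re < (f.1 (sortPerm f0.1 j)).re)} := by
      ext f
      simp only [Set.mem_setOf_eq, Set.mem_iInter, StrictMono, Function.comp_apply]
    rw [this]
    refine isOpen_iInter_of_finite fun i => isOpen_iInter_of_finite fun j => ?_
    by_cases hij : i < j
    · simp only [hij, forall_true_left]
      have hc1 : Continuous fun f : OrderedGen n => (f.1 (sortPerm f0.1 i)).re :=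
        Complex.continuous_re.comp ((continuous_apply _).comp continuous_subtype_val)
      have hc2 : Continuous fun f : OrderedGen n => (f.1 (sortPerm f0.1 j)).re :=
        Complex.continuous_re.comp ((continuous_apply _).comp continuous_subtype_val)
      exact isOpen_lt hc1 hc2
    · have : {f : OrderedGen n |
          i < j → ((f.1 (sortPerm f0.1 i)).re < (f.1 (sortPerm f0.1 j)).re)}
          = Set.univ := by
        ext f; simp [hij]
      rw [this]; exact isOpen_univ
  have hmem : f0 ∈ {f : OrderedGen n |
      StrictMono fun i => ((f.1 ∘ sortPerm f0.1) i).re} := strictMono_sorted f0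
  filter_upwards [hopen.mem_nhds hmem] with f hf
  refine sorted_unique ((sortPerm f.1).trans (sortPerm f0.1).symm)
    (strictMono_sorted f) hf ?_
  funext x
  simp [Function.comp]

lemma continuous_sortMap : Continuous (sortMap (n := n)) :=
  continuous_induced_rng.mpr continuous_sortMapVal

/-- The sorted set is convex. -/
lemma convex_sortedSet : Convex ℝ (SortedSet n) := by
  intro x hx y hy a b ha hb hab
  intro i j hij
  have hxij : (x i).re < (x j).re := hx hij
  have hyij : (y i).re < (y j).re := hy hij
  simp only [Pi.add_apply, Pi.smul_apply, Complex.add_re, Complex.real_smul,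
    Complex.mul_re, Complex.ofReal_re, Complex.ofReal_im, zero_mul, sub_zero]
  rcases eq_or_lt_of_le ha with h | h
  · have hb1 : b = 1 := by linarith
    rw [← h, hb1]; simpa using hyij
  · have h1 : a * (x i).re < a * (x j).re := mul_lt_mul_of_pos_left hxij h
    have h2 : b * (y i).re ≤ b * (y j).re := mul_le_mul_of_nonneg_left hyij.le hb
    linarith

lemma nonempty_sortedSet : (SortedSet n).Nonempty := by
  refine ⟨fun i => (i : ℕ), ?_⟩
  intro i j hij
  simp only [Complex.natCast_re]
  exact_mod_cast hij

/-- The quotient is homeomorphic to the sorted set. -/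
noncomputable def quotHomeo : Quotient (genSetoid n) ≃ₜ SortedSet n where
  toFun := Quotient.lift sortMap sortMap_respects
  invFun g := Quotient.mk (genSetoid n) (incl g)
  left_inv := by
    intro q
    induction q using Quotient.inductionOn with
    | h f =>
      apply Quotient.sound
      exact ⟨sortPerm f.1, rfl⟩
  right_inv g := sortMap_incl g
  continuous_toFun := continuous_sortMap.quotient_lift _
  continuous_invFun := by
    apply Continuous.comp continuous_quotient_mk'
    exact Continuous.subtype_mk continuous_subtype_val _

end EgenAux

/-- The space `E_n^gen` of unordered configurations of `n` distinct points of `ℂ` with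
pairwise distinct real parts is contractible. -/
theorem Egen_contractible (n : ℕ) :
    ContractibleSpace (Quotient (genSetoid n)) := by
  have : ContractibleSpace (EgenAux.SortedSet n) :=
    EgenAux.convex_sortedSet.contractibleSpace EgenAux.nonempty_sortedSet
  exact (EgenAux.quotHomeo (n := n)).contractibleSpace
end

section
/- Let c be an n-cycle in S_n and T the set of transpositions, with absolute length l_T. Then the intersection of the cyclic subgroup ⟨c⟩ with the interval [1,c] = {w : l_T(w) + l_T(w^{-1}c) = l_T(c)} is exactly {1, c}. -/
/-- The absolute length of a permutation: the minimal number of transpositions needed to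
write it as a product. -/
noncomputable def swapLen (n : ℕ) (σ : Equiv.Perm (Fin n)) : ℕ :=
  sInf {k | ∃ l : List (Equiv.Perm (Fin n)),
    (∀ x ∈ l, x.IsSwap) ∧ l.length = k ∧ l.prod = σ}

namespace ZpowAux

open Equiv Equiv.Perm Module Finset

variable {n : ℕ}

/-- The fixed subspace of a permutation acting on `Fin n → ℚ`. -/
noncomputable def fixSp (n : ℕ) (σ : Equiv.Perm (Fin n)) : Submodule ℚ (Fin n → ℚ) :=
  LinearMap.ker (LinearMap.funLeft ℚ ℚ σ - LinearMap.id)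

lemma mem_fixSp {σ : Perm (Fin n)} {v : Fin n → ℚ} :
    v ∈ fixSp n σ ↔ ∀ x, v (σ x) = v x := by
  simp only [fixSp, LinearMap.mem_ker, LinearMap.sub_apply, LinearMap.funLeft_apply,
    LinearMap.id_apply, funext_iff, Pi.sub_apply, Pi.zero_apply, sub_eq_zero,
    Function.comp_apply]

lemma finrank_V : finrank ℚ (Fin n → ℚ) = n := by
  simp [Module.finrank_pi]

lemma fixSp_swap {a b : Fin n} (hab : a ≠ b) :
    n ≤ finrank ℚ (fixSp n (Equiv.swap a b)) + 1 := by
  set φ : (Fin n → ℚ) →ₗ[ℚ] ℚ :=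
    (LinearMap.proj a : (Fin n → ℚ) →ₗ[ℚ] ℚ) - (LinearMap.proj b : (Fin n → ℚ) →ₗ[ℚ] ℚ) with hφ
  have hker : LinearMap.ker φ ≤ fixSp n (Equiv.swap a b) := by
    intro v hv
    have hv' : v a = v b := by
      have : φ v = 0 := hv
      simpa [hφ, sub_eq_zero] using this
    rw [mem_fixSp]
    intro x
    rcases eq_or_ne x a with rfl | hxa
    · rw [Equiv.swap_apply_left]; exact hv'.symm
    rcases eq_or_ne x b with rfl | hxb
    · rw [Equiv.swap_apply_right]; exact hv'
    · rw [Equiv.swap_apply_of_ne_of_ne hxa hxb]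
  have h1 := LinearMap.finrank_range_add_finrank_ker φ
  have h2 : finrank ℚ (LinearMap.range φ) ≤ 1 := by
    simpa using (LinearMap.range φ).finrank_le
  have h3 : finrank ℚ (LinearMap.ker φ) ≤ finrank ℚ (fixSp n (Equiv.swap a b)) :=
    Submodule.finrank_mono hker
  rw [finrank_V] at h1
  omega

lemma prod_lower (l : List (Equiv.Perm (Fin n))) (hl : ∀ x ∈ l, x.IsSwap) :
    n ≤ finrank ℚ (fixSp n l.prod) + l.length := by
  induction l with
  | nil =>
    have htop : fixSp n ((List.nil : List (Perm (Fin n))).prod) = ⊤ := by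
      ext v; simp [mem_fixSp]
    rw [htop]
    simp [finrank_top, finrank_V]
  | cons τ l ih =>
    obtain ⟨a, b, hab, hτ⟩ := hl τ List.mem_cons_self
    have hsw := fixSp_swap (n := n) hab
    have hih := ih (fun x hx => hl x (List.mem_cons_of_mem _ hx))
    have hint : fixSp n (Equiv.swap a b) ⊓ fixSp n l.prod ≤ fixSp n (τ * l.prod) := by
      rintro v hv
      have hv1 := mem_fixSp.mp hv.1
      have hv2 := mem_fixSp.mp hv.2
      rw [mem_fixSp]
      intro x
      rw [hτ, Equiv.Perm.mul_apply, hv1, hv2]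
    have heq := Submodule.finrank_sup_add_finrank_inf_eq
      (fixSp n (Equiv.swap a b)) (fixSp n l.prod)
    have hsup : finrank ℚ ↥(fixSp n (Equiv.swap a b) ⊔ fixSp n l.prod) ≤ n := by
      have := (fixSp n (Equiv.swap a b) ⊔ fixSp n l.prod).finrank_le
      rwa [finrank_V] at this
    have hmono := Submodule.finrank_mono hint
    simp only [List.prod_cons, List.length_cons]
    show n ≤ finrank ℚ (fixSp n (τ * l.prod)) + (l.length + 1)
    omega

lemma fixSp_zpow_le (σ : Equiv.Perm (Fin n)) (m : ℤ) : fixSp n σ ≤ fixSp n (σ ^ m) := by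
  intro v hv
  rw [mem_fixSp] at hv ⊢
  have hnat : ∀ (j : ℕ) (x : Fin n), v ((σ ^ j) x) = v x := by
    intro j
    induction j with
    | zero => simp
    | succ j ih =>
      intro x
      rw [pow_succ, Equiv.Perm.mul_apply, ih, hv]
  intro x
  rcases m with j | j
  · simpa using hnat j x
  · rw [zpow_negSucc]
    have := (hnat (j + 1) ((σ ^ (j + 1))⁻¹ x)).symm
    rwa [← Equiv.Perm.mul_apply, mul_inv_cancel, Equiv.Perm.one_apply] at this
    
lemma finrank_fixSp_pow_le {c : Equiv.Perm (Fin n)} (hc : c.IsCycle)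
    (hsupp : c.support = Finset.univ) {g : ℕ} (hg : 0 < g) :
    finrank ℚ (fixSp n (c ^ g)) ≤ g := by
  obtain ⟨x₀, hx₀, -⟩ := id hc
  have hmove : ∀ x : Fin n, c x ≠ x := fun x =>
    Equiv.Perm.mem_support.mp (hsupp ▸ Finset.mem_univ x)
  set φ : (Fin n → ℚ) →ₗ[ℚ] (Fin g → ℚ) :=
    LinearMap.funLeft ℚ ℚ (fun i : Fin g => (c ^ (i : ℕ)) x₀) with hφdef
  have hinj : Function.Injective (φ.comp (fixSp n (c ^ g)).subtype) := by
    rw [← LinearMap.ker_eq_bot, LinearMap.ker_eq_bot']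
    rintro ⟨v, hv⟩ hφ0
    have hv' := mem_fixSp.mp hv
    have h0 : ∀ i : Fin g, v ((c ^ (i : ℕ)) x₀) = 0 := by
      intro i
      have h1 : φ v = 0 := hφ0
      simpa [hφdef, LinearMap.funLeft_apply] using congrFun h1 i
    have hall : ∀ m : ℕ, v ((c ^ m) x₀) = 0 := by
      intro m
      induction m using Nat.strong_induction_on with
      | _ m ih =>
        rcases lt_or_ge m g with hm | hm
        · exact h0 ⟨m, hm⟩
        · have key : (c ^ m) x₀ = (c ^ g) ((c ^ (m - g)) x₀) := by
            rw [← Equiv.Perm.mul_apply, ← pow_add]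
            congr 2
            omega
          rw [key, hv']
          exact ih (m - g) (by omega)
    apply Subtype.ext
    funext x
    obtain ⟨m, hm⟩ := hc.exists_pow_eq (hmove x₀) (hmove x)
    have := hall m
    rw [hm] at this
    simpa using this
  have hle := LinearMap.finrank_le_finrank_of_injective hinj
  have : finrank ℚ (Fin g → ℚ) = g := by simp [Module.finrank_pi]
  rw [this] at hle
  exact hle

lemma swapLen_exists (σ : Equiv.Perm (Fin n)) :
    ∃ l : List (Equiv.Perm (Fin n)),
      (∀ x ∈ l, x.IsSwap) ∧ l.length = swapLen n σ ∧ l.prod = σ := by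
  obtain ⟨l, hprod, hswap⟩ := (Equiv.Perm.truncSwapFactors σ).out
  have hne : {k | ∃ l : List (Equiv.Perm (Fin n)),
      (∀ x ∈ l, x.IsSwap) ∧ l.length = k ∧ l.prod = σ}.Nonempty :=
    ⟨l.length, l, hswap, rfl, hprod⟩
  exact Nat.sInf_mem hne

lemma swapLen_le (σ : Equiv.Perm (Fin n)) (l : List (Equiv.Perm (Fin n)))
    (h1 : ∀ x ∈ l, x.IsSwap) (h2 : l.prod = σ) : swapLen n σ ≤ l.length :=
  Nat.sInf_le ⟨l, h1, rfl, h2⟩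

lemma swapLen_one : swapLen n 1 = 0 :=
  Nat.le_zero.mp (swapLen_le 1 [] (by simp) (by simp))

lemma swapLen_lower (σ : Equiv.Perm (Fin n)) :
    n ≤ finrank ℚ (fixSp n σ) + swapLen n σ := by
  obtain ⟨l, h1, h2, h3⟩ := swapLen_exists σ
  have := prod_lower l h1
  rwa [h2, h3] at this

theorem cycle_swap_list {f : Equiv.Perm (Fin n)} (hf : f.IsCycle) :
    ∃ l : List (Equiv.Perm (Fin n)),
      (∀ x ∈ l, x.IsSwap) ∧ l.length + 1 = f.support.card ∧ l.prod = f := by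
  obtain ⟨x, hx, -⟩ := id hf
  by_cases h1 : f (f x) = x
  · refine ⟨[f], ?_, ?_, by simp⟩
    · intro y hy
      rw [List.mem_singleton] at hy
      rw [hy]
      exact ⟨x, f x, Ne.symm hx, hf.eq_swap_of_apply_apply_eq_self hx h1⟩
    · rw [hf.eq_swap_of_apply_apply_eq_self hx h1,
        Equiv.Perm.card_support_swap (Ne.symm hx)]
      rfl
  · have hlt : (Equiv.swap x (f x) * f).support.card < f.support.card :=
      Equiv.Perm.card_support_swap_mul hx
    have hcyc := hf.swap_mul hx h1
    obtain ⟨l, hl1, hl2, hl3⟩ := cycle_swap_list hcyc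
    refine ⟨Equiv.swap x (f x) :: l, ?_, ?_, ?_⟩
    · intro y hy
      rcases List.mem_cons.mp hy with rfl | hy
      · exact ⟨x, f x, Ne.symm hx, rfl⟩
      · exact hl1 y hy
    · have hcard : (Equiv.swap x (f x) * f).support.card + 1 = f.support.card := by
        rw [Equiv.Perm.support_swap_mul_eq _ _ h1, Finset.sdiff_singleton_eq_erase,
          Finset.card_erase_add_one (Equiv.Perm.mem_support.mpr hx)]
      rw [List.length_cons]
      omega
    · rw [List.prod_cons, hl3, ← mul_assoc, Equiv.swap_mul_self, one_mul]
termination_by f.support.card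
decreasing_by exact hlt

end ZpowAux

open ZpowAux Module

/-- For an `n`-cycle `c` in `S_n`, the intersection of the cyclic subgroup `⟨c⟩` with the
absolute-order interval `[1, c]` is exactly `{1, c}`. -/
theorem zpowers_inter_interval (n : ℕ) (c : Equiv.Perm (Fin n))
    (hc : c.IsCycle) (hsupp : c.support = Finset.univ) :
    {w : Equiv.Perm (Fin n) | w ∈ Subgroup.zpowers c ∧
      swapLen n w + swapLen n (w⁻¹ * c) = swapLen n c} = {1, c} := by
  classical
  obtain ⟨x₀, hx₀, -⟩ := id hc
  have hn : 0 < n := x₀.pos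
  have horder : orderOf c = n := by
    rw [hc.orderOf, hsupp, Finset.card_univ, Fintype.card_fin]
  ext w
  simp only [Set.mem_setOf_eq, Set.mem_insert_iff, Set.mem_singleton_iff]
  constructor
  · rintro ⟨hw, heq⟩
    obtain ⟨k, rfl⟩ := Subgroup.mem_zpowers_iff.mp hw
    -- upper bound for swapLen c
    obtain ⟨l, hl1, hl2, hl3⟩ := cycle_swap_list hc
    have hub : swapLen n c + 1 ≤ n := by
      have h := swapLen_le c l hl1 hl3
      rw [hsupp, Finset.card_univ, Fintype.card_fin] at hl2
      omega
    -- lower bound for powers of c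
    have key : ∀ m : ℤ, n ≤ Int.gcd (n : ℤ) m + swapLen n (c ^ m) := by
      intro m
      have hc1 : c ^ (n : ℤ) = 1 := orderOf_dvd_iff_zpow_eq_one.mp (by rw [horder])
      have hcg : c ^ (Int.gcd (n : ℤ) m : ℕ) = (c ^ m) ^ (Int.gcdB (n : ℤ) m) := by
        have h1 : c ^ ((Int.gcd (n : ℤ) m : ℤ)) = (c ^ m) ^ Int.gcdB (n : ℤ) m := by
          rw [Int.gcd_eq_gcd_ab (n : ℤ) m, zpow_add, zpow_mul, zpow_mul, hc1,
            one_zpow, one_mul]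
        rw [← zpow_natCast, h1]
      have hfix : fixSp n (c ^ m) ≤ fixSp n (c ^ (Int.gcd (n : ℤ) m : ℕ)) := by
        rw [hcg]
        exact fixSp_zpow_le _ _
      have hgpos : 0 < Int.gcd (n : ℤ) m :=
        Int.gcd_pos_iff.mpr (Or.inl (by exact_mod_cast hn.ne'))
      have hD := finrank_fixSp_pow_le hc hsupp hgpos
      have hmono := Submodule.finrank_mono hfix
      have hlow := swapLen_lower (c ^ m)
      omega
    have h1 := key k
    have h2 : n ≤ Int.gcd (n : ℤ) (1 - k) + swapLen n ((c ^ k)⁻¹ * c) := by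
      have hrw : (c ^ k)⁻¹ * c = c ^ (1 - k) := by
        group
      rw [hrw]
      exact key (1 - k)
    have hdvd1 : Int.gcd (n : ℤ) k ∣ n := by
      exact_mod_cast Int.gcd_dvd_left (a := (n : ℤ)) (b := k)
    have hdvd2 : Int.gcd (n : ℤ) (1 - k) ∣ n := by
      exact_mod_cast Int.gcd_dvd_left (a := (n : ℤ)) (b := 1 - k)
    have hhalf : ∀ g : ℕ, g ∣ n → g ≠ n → 2 * g ≤ n := by
      intro g hgd hgn
      obtain ⟨m, rfl⟩ := hgd
      match m, hgn, hn with
      | 0, hgn, hn => omega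
      | 1, hgn, hn => omega
      | (m + 2), hgn, hn => nlinarith
    rcases eq_or_ne (Int.gcd (n : ℤ) k) n with hg | hg
    · left
      have hnk : (n : ℤ) ∣ k := by
        have := Int.gcd_dvd_right (a := (n : ℤ)) (b := k)
        rwa [hg] at this
      exact orderOf_dvd_iff_zpow_eq_one.mp (by rw [horder]; exact hnk)
    rcases eq_or_ne (Int.gcd (n : ℤ) (1 - k)) n with hg' | hg'
    · right
      have hnk : (n : ℤ) ∣ (1 - k) := by
        have := Int.gcd_dvd_right (a := (n : ℤ)) (b := 1 - k)
        rwa [hg'] at this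
      have h0 : c ^ (1 - k) = 1 := orderOf_dvd_iff_zpow_eq_one.mp (by rw [horder]; exact hnk)
      calc c ^ k = c ^ (1 - k) * c ^ k := by rw [h0, one_mul]
        _ = c ^ (1 - k + k) := (zpow_add c _ _).symm
        _ = c := by norm_num
    · exfalso
      have e1 := hhalf _ hdvd1 hg
      have e2 := hhalf _ hdvd2 hg'
      omega
  · rintro (rfl | rfl)
    · exact ⟨Subgroup.one_mem _, by simp [ZpowAux.swapLen_one]⟩
    · exact ⟨Subgroup.mem_zpowers _, by simp [ZpowAux.swapLen_one]⟩
end
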